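/- Let φ: Σ⁺ → S be a semigroup morphism to a finite semigroup S. If there exists a φ-weakly-good automaton with N states, then there exists a φ-good automaton with N+1 states. -/

import Mathlib

/-- A (nondeterministic) Büchi/finite-word automaton with ordered states. -/
structure Auto (A : Type) where
  Q : Type
  fin : Fintype Q
  lin : LinearOrder Q
  trans : Q → A → Q → Prop
  init : Q
  final : Set Q
  rep : Set Q

namespace Auto

variable {A : Type} (M : Auto A)

/-- The strict order on states. -/
def slt (p q : M.Q) : Prop := M.lin.lt p q

/-- `pathIn X p w q`: nonempty word `w` labels a run from `p` to `q`
with all intermediate states in `X`. -/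
def pathIn (X : Set M.Q) : M.Q → List A → M.Q → Prop
  | _, [], _ => False
  | p, [a], q => M.trans p a q
  | p, a :: b :: w, q => ∃ r, r ∈ X ∧ M.trans p a r ∧ pathIn X r (b :: w) q

/-- `L_{p,X,q}`. -/
def Lset (X : Set M.Q) (p q : M.Q) : Set (List A) := {w | M.pathIn X p w q}

/-- `↓q`. -/
def below (q : M.Q) : Set M.Q := {p | M.slt p q}

/-- `L_q = L_{q,↓q,q}`. -/
def Lq (q : M.Q) : Set (List A) := M.Lset (M.below q) q q

/-- Accepting run on a nonempty finite word: `ρ i` is the state after reading `i` letters. -/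
def FinAccRun (w : List A) (ρ : Fin (w.length + 1) → M.Q) : Prop :=
  ρ 0 = M.init ∧
  (∀ i : Fin w.length, M.trans (ρ i.castSucc) (w.get i) (ρ i.succ)) ∧
  ρ (Fin.last w.length) ∈ M.final

/-- Accepting (Büchi) run on an infinite word. -/
def InfAccRun (w : ℕ → A) (ρ : ℕ → M.Q) : Prop :=
  ρ 0 = M.init ∧ (∀ i, M.trans (ρ i) (w i) (ρ (i + 1))) ∧
  ∀ n, ∃ m, n ≤ m ∧ ρ m ∈ M.rep

/-- (G1): every finite or infinite word has exactly one accepting run. -/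
def G1 : Prop :=
  (∀ w : List A, w ≠ [] → ∃! ρ : Fin (w.length + 1) → M.Q, M.FinAccRun w ρ) ∧
  (∀ w : ℕ → A, ∃! ρ : ℕ → M.Q, M.InfAccRun w ρ)

/-- (G2): each `L_q` is mapped by `φ` to a single idempotent of `S`. -/
def G2 {S : Type} [Semigroup S] (φ : List A → S) : Prop :=
  ∀ q : M.Q, ∃ e : S, e * e = e ∧ ∀ w ∈ M.Lq q, φ w = e

/-- (G3): the initial state has no incoming transitions and is maximal. -/
def G3 : Prop :=
  (∀ p a, ¬ M.trans p a M.init) ∧ ∀ q : M.Q, q ≠ M.init → M.slt q M.init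

/-- `φ`-weakly-good automaton. -/
def WeaklyGood {S : Type} [Semigroup S] (φ : List A → S) : Prop :=
  M.G1 ∧ M.G2 φ ∧ M.G3

/-- (G4) and `φ`-goodness. -/
def Good {S : Type} [Semigroup S] (φ : List A → S) : Prop :=
  M.WeaklyGood φ ∧
  ∃ f : M.Q, M.final = {f} ∧ (∀ a q, ¬ M.trans f a q) ∧
    M.slt f M.init ∧ ∀ q : M.Q, q ≠ M.init → q ≠ f → M.slt q f

def Deterministic : Prop := ∀ p a q q', M.trans p a q → M.trans p a q' → q = q'

def Complete : Prop := ∀ p a, ∃ q, M.trans p a q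

end Auto


/- ### Auxiliary construction -/

namespace Auto

variable {A : Type}

attribute [local instance] Auto.lin

lemma pathIn_mono (M : Auto A) {X Y : Set M.Q} (h : X ⊆ Y) :
    ∀ (w : List A) (p q : M.Q), M.pathIn X p w q → M.pathIn Y p w q := by
  intro w
  induction w with
  | nil => intro p q hp; exact hp.elim
  | cons a w ih =>
    intro p q hp
    cases w with
    | nil => exact hp
    | cons b w =>
      obtain ⟨r, hr, ht, hp⟩ := hp
      exact ⟨r, h hr, ht, ih r q hp⟩

open Classical in
/-- Order key for the extended automaton: the initial state is largest,
then the new state `none`, then the old states in their old order. -/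
noncomputable def okey (M : Auto A) (x : Option M.Q) : Bool ×ₗ (Bool ×ₗ M.Q) :=
  toLex (if x = some M.init then true else false, toLex (x.isNone, x.getD M.init))

lemma okey_inj (M : Auto A) : Function.Injective (okey M) := by
  intro x y h
  simp only [okey, toLex_inj, Prod.mk.injEq] at h
  obtain ⟨h1, h2, h3⟩ := h
  cases x <;> cases y <;> simp_all

/-- The extended automaton. -/
noncomputable def extend (M : Auto A) : Auto A where
  Q := Option M.Q
  fin := @instFintypeOption _ M.fin
  lin := LinearOrder.lift' (okey M) (okey_inj M)
  trans := fun x a y =>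
    match x with
    | none => False
    | some p =>
      match y with
      | none => ∃ q ∈ M.final, M.trans p a q
      | some q => M.trans p a q
  init := some M.init
  final := {none}
  rep := {x | ∃ q ∈ M.rep, x = some q}

variable (M : Auto A)

lemma extend_trans_none (a : A) (y : Option M.Q) : ¬ (extend M).trans none a y :=
  fun h => h

lemma extend_trans_some_some {p q : M.Q} {a : A} :
    (extend M).trans (some p) a (some q) ↔ M.trans p a q := Iff.rfl

lemma extend_trans_some_none {p : M.Q} {a : A} :
    (extend M).trans (some p) a none ↔ ∃ q ∈ M.final, M.trans p a q := Iff.rfl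

lemma slt_extend_iff (x y : Option M.Q) :
    (extend M).slt x y ↔ okey M x < okey M y := Iff.rfl

lemma slt_to_init (x : Option M.Q) (hx : x ≠ some M.init) :
    (extend M).slt x (some M.init) := by
  rw [slt_extend_iff]
  unfold okey
  rw [Prod.Lex.lt_iff]
  left
  simp [hx, Bool.lt_iff]

lemma slt_some_none (q : M.Q) (hq : q ≠ M.init) : (extend M).slt (some q) none := by
  rw [slt_extend_iff]
  unfold okey
  rw [Prod.Lex.lt_iff]
  right
  refine ⟨by simp [hq], ?_⟩
  rw [Prod.Lex.lt_iff]
  left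
  simp [Bool.lt_iff]

lemma slt_of_some_some {p q : M.Q} (hp : p ≠ M.init) (hq : q ≠ M.init)
    (h : (extend M).slt (some p) (some q)) : M.slt p q := by
  rw [slt_extend_iff] at h
  unfold okey at h
  rw [Prod.Lex.lt_iff] at h
  simp [hp, hq, Prod.Lex.lt_iff, Bool.lt_iff] at h
  exact h

lemma not_pathIn_extend_none (X : Set (Option M.Q)) :
    ∀ (w : List A) (y : Option M.Q), ¬ (extend M).pathIn X none w y := by
  intro w
  cases w with
  | nil => intro y h; exact h
  | cons a w =>
    cases w with
    | nil => intro y h; exact extend_trans_none M a y h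
    | cons b w =>
      rintro y ⟨r, _, ht, _⟩
      exact extend_trans_none M a r ht

lemma pathIn_extend_proj (hG3 : ∀ p a, ¬ M.trans p a M.init) (X : Set (Option M.Q)) :
    ∀ (w : List A) (p q : M.Q), (extend M).pathIn X (some p) w (some q) →
      M.pathIn {r | some r ∈ X ∧ r ≠ M.init} p w q := by
  intro w
  induction w with
  | nil => intro p q h; exact h.elim
  | cons a w ih =>
    intro p q h
    cases w with
    | nil => exact h
    | cons b w' =>
      obtain ⟨r, hr, ht, hp⟩ := h
      cases r with
      | none => exact absurd hp (not_pathIn_extend_none M X _ _)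
      | some r0 =>
        exact ⟨r0, ⟨hr, fun h0 => hG3 p a (h0 ▸ ht)⟩, ht, ih r0 q hp⟩

end Auto

/-- From a `φ`-weakly-good automaton with `N` states one can construct a
`φ`-good automaton (with `N + 1` states). -/
theorem good_of_weaklyGood {A S : Type} [Fintype A] [Semigroup S] [Fintype S]
    (φ : List A → S)
    (hφ : ∀ u v : List A, u ≠ [] → v ≠ [] → φ (u ++ v) = φ u * φ v)
    (N : ℕ) (M : Auto A) (hM : M.WeaklyGood φ)
    (hN : @Fintype.card M.Q M.fin = N) :
    ∃ M' : Auto A, M'.Good φ ∧ @Fintype.card M'.Q M'.fin = N + 1 := by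
  classical
  obtain ⟨⟨hfinU, hinfU⟩, hG2, hno, hmax⟩ := hM
  set M' := Auto.extend M with hM'def
  -- finite-word part of G1
  have Gfin : ∀ w : List A, w ≠ [] → ∃! ρ : Fin (w.length + 1) → M'.Q, M'.FinAccRun w ρ := by
    intro w hw
    obtain ⟨σ, hσ, huniq⟩ := hfinU w hw
    have hn : 0 < w.length := List.length_pos_iff.mpr hw
    have h0last : (0 : Fin (w.length + 1)) ≠ Fin.last w.length := by
      simp [Fin.ext_iff]
      omega
    refine ⟨fun i => (if i = Fin.last w.length then none else some (σ i) : Option M.Q), ⟨?_, ?_, ?_⟩, ?_⟩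
    · beta_reduce
      rw [if_neg h0last, hσ.1]
      rfl
    · intro i
      have hcs : i.castSucc ≠ Fin.last w.length := by
        simp [Fin.ext_iff]
        omega
      beta_reduce
      by_cases hi : i.succ = Fin.last w.length
      · rw [if_neg hcs, if_pos hi]
        exact (Auto.extend_trans_some_none M).mpr
          ⟨σ i.succ, by rw [hi]; exact hσ.2.2, hσ.2.1 i⟩
      · rw [if_neg hcs, if_neg hi]
        exact (Auto.extend_trans_some_some M).mpr (hσ.2.1 i)
    · beta_reduce
      rw [if_pos rfl]
      exact rfl
    · intro ρ' hρ'
      obtain ⟨h0, hstep, hfin⟩ := hρ'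
      have hlast : ρ' (Fin.last w.length) = none := hfin
      have hns : ∀ i : Fin (w.length + 1), i.val < w.length → ∃ p, ρ' i = some p := by
        intro i hi
        have hstep' := hstep ⟨i.val, hi⟩
        have hcs : (⟨i.val, hi⟩ : Fin w.length).castSucc = i := by
          apply Fin.ext
          simp
        rw [hcs] at hstep'
        cases h : ρ' i with
        | some p => exact ⟨p, rfl⟩
        | none =>
          rw [h] at hstep'
          exact absurd hstep' (Auto.extend_trans_none M _ _)
      have hj : w.length - 1 < w.length := by omega
      have hj0succ : (⟨w.length - 1, hj⟩ : Fin w.length).succ = Fin.last w.length := by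
        apply Fin.ext
        simp
        omega
      obtain ⟨pl, hpl⟩ := hns (⟨w.length - 1, hj⟩ : Fin w.length).castSucc (by simpa using hj)
      have hl := hstep ⟨w.length - 1, hj⟩
      rw [hj0succ, hlast, hpl] at hl
      obtain ⟨ql, hqlF, hqlt⟩ := (Auto.extend_trans_some_none M).mp hl
      have hrun : M.FinAccRun w (fun i => (ρ' i).getD ql) := by
        refine ⟨?_, ?_, ?_⟩
        · show (ρ' 0).getD ql = M.init
          rw [h0]
          rfl
        · intro i
          show M.trans ((ρ' i.castSucc).getD ql) (w.get i) ((ρ' i.succ).getD ql)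
          by_cases hi : i.succ = Fin.last w.length
          · have hieq : i = (⟨w.length - 1, hj⟩ : Fin w.length) := by
              apply Fin.ext
              have h1 := Fin.ext_iff.mp hi
              simp at h1 ⊢
              omega
            rw [hieq, hj0succ, hlast, hpl]
            exact hqlt
          · obtain ⟨p, hp⟩ := hns i.castSucc (by simpa using i.isLt)
            obtain ⟨q, hq⟩ := hns i.succ (by
              have h3 : i.succ.val ≠ w.length := fun h =>
                hi (by apply Fin.ext; rw [h]; simp)
              have h4 := i.succ.isLt
              omega)
            have hstep' := hstep i
            rw [hp, hq] at hstep'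
            rw [hp, hq]
            exact hstep'
        · show (ρ' (Fin.last w.length)).getD ql ∈ M.final
          rw [hlast]
          exact hqlF
      have hσeq : (fun i => (ρ' i).getD ql) = σ := huniq _ hrun
      funext i
      by_cases hi : i = Fin.last w.length
      · rw [hi, hlast, if_pos rfl]
      · obtain ⟨p, hp⟩ := hns i
          (lt_of_le_of_ne (Nat.lt_succ_iff.mp i.isLt) (fun h => hi (Fin.ext h)))
        rw [if_neg hi, hp]
        have hσi : σ i = p := by
          rw [← hσeq]
          simp [hp]
        rw [hσi]
  -- infinite-word part of G1
  have Ginf : ∀ w : ℕ → A, ∃! ρ : ℕ → M'.Q, M'.InfAccRun w ρ := by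
    intro w
    obtain ⟨σ, hσ, huniq⟩ := hinfU w
    refine ⟨fun i => some (σ i), ⟨congrArg some hσ.1,
      fun i => (Auto.extend_trans_some_some M).mpr (hσ.2.1 i), fun n => ?_⟩, ?_⟩
    · obtain ⟨m, hm, hmem⟩ := hσ.2.2 n
      exact ⟨m, hm, ⟨σ m, hmem, rfl⟩⟩
    · rintro ρ' ⟨h0, hstep, hrep⟩
      have hns : ∀ i, ∃ p, ρ' i = some p := by
        intro i
        cases h : ρ' i with
        | some p => exact ⟨p, rfl⟩
        | none =>
          have hstep' := hstep i
          rw [h] at hstep'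
          exact absurd hstep' (Auto.extend_trans_none M _ _)
      have hrun : M.InfAccRun w (fun i => (ρ' i).getD M.init) := by
        refine ⟨?_, ?_, ?_⟩
        · show (ρ' 0).getD M.init = M.init
          rw [h0]
          rfl
        · intro i
          obtain ⟨p, hp⟩ := hns i
          obtain ⟨q, hq⟩ := hns (i + 1)
          have hstep' := hstep i
          rw [hp, hq] at hstep'
          show M.trans ((ρ' i).getD M.init) (w i) ((ρ' (i + 1)).getD M.init)
          rw [hp, hq]
          exact hstep'
        · intro n
          obtain ⟨m, hm, hmem⟩ := hrep n
          obtain ⟨q, hqR, hq⟩ := hmem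
          refine ⟨m, hm, ?_⟩
          show (ρ' m).getD M.init ∈ M.rep
          rw [hq]
          exact hqR
      have hσeq : (fun i => (ρ' i).getD M.init) = σ := huniq _ hrun
      funext i
      obtain ⟨p, hp⟩ := hns i
      rw [hp]
      have hσi : σ i = p := by
        rw [← hσeq]
        simp [hp]
      rw [hσi]
  -- G2
  have G2' : M'.G2 φ := by
    intro x
    cases x with
    | none =>
      obtain ⟨e, he, _⟩ := hG2 M.init
      exact ⟨e, he, fun w hw => absurd hw (Auto.not_pathIn_extend_none M _ _ _)⟩
    | some q0 =>
      obtain ⟨e, he, hmap⟩ := hG2 q0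
      refine ⟨e, he, fun w hw => hmap w ?_⟩
      have h1 := Auto.pathIn_extend_proj M hno _ w q0 q0 hw
      refine Auto.pathIn_mono M ?_ w q0 q0 h1
      rintro r ⟨hr1, hr2⟩
      by_cases hq0 : q0 = M.init
      · subst hq0
        exact hmax r hr2
      · exact Auto.slt_of_some_some M hr2 hq0 hr1
  -- G3
  have G3a : ∀ p a, ¬ M'.trans p a M'.init := by
    intro p a h
    cases p with
    | none => exact Auto.extend_trans_none M a _ h
    | some p => exact hno p a ((Auto.extend_trans_some_some M).mp h)
  have G3b : ∀ q : M'.Q, q ≠ M'.init → M'.slt q M'.init := fun q hq =>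
    Auto.slt_to_init M q hq
  -- G4 and conclusion
  refine ⟨M', ⟨⟨⟨Gfin, Ginf⟩, G2', G3a, G3b⟩, none, rfl,
    fun a q h => Auto.extend_trans_none M a q h,
    Auto.slt_to_init M none (by simp), ?_⟩, ?_⟩
  · intro q hq1 hq2
    cases q with
    | none => exact absurd rfl hq2
    | some q0 => exact Auto.slt_some_none M q0 (fun h => hq1 (congrArg some h))
  · have hc := @Fintype.card_option M.Q M.fin
    show @Fintype.card (Option M.Q) (@instFintypeOption _ M.fin) = N + 1
    rw [hc, hN]
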